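/- Binding energy constraint at the optimum: assume Q, B, N_0 > 0, H_{i,n} > 0 for every broadcast block, and that at least one block is broadcast. If ({T*_{i,n}}, {p*_{i,n}}) is an optimal solution of problem (P3.1), then the energy budget is exhausted: Σ_{i,n} T*_{i,n}·p*_{i,n} = E. -/
import Mathlib


noncomputable section

/-- Binary indicators. -/
def IsBinary {K N : ℕ} (α : Fin (K+1) → Fin (N+1) → Fin (K+1) → ℝ) : Prop :=
  ∀ i n k, α i n k = 0 ∨ α i n k = 1

/-- Block `(i,n)` is broadcast iff some device requests it, i.e. `α* i n = max_k α* i n k = 1`. -/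
def Broadcast {K N : ℕ} (α : Fin (K+1) → Fin (N+1) → Fin (K+1) → ℝ)
    (i : Fin (K+1)) (n : Fin (N+1)) : Prop :=
  ∃ k, α i n k = 1

/-- Feasibility for problem (P3.1): nonnegative latencies and powers, the rate
constraint `Q ≤ T_{i,n} * B * log₂(1 + p_{i,n} H_{i,n} / N0)` for every broadcast
block, and the total energy budget. -/
def P31Feasible {K N : ℕ} (Q B N0 E : ℝ)
    (α : Fin (K+1) → Fin (N+1) → Fin (K+1) → ℝ)
    (Heq : Fin (K+1) → Fin (N+1) → ℝ)
    (T p : Fin (K+1) → Fin (N+1) → ℝ) : Prop :=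
  (∀ i n, 0 ≤ T i n) ∧ (∀ i n, 0 ≤ p i n) ∧
  (∀ i n, Broadcast α i n →
    Q ≤ T i n * (B * Real.logb 2 (1 + p i n * Heq i n / N0))) ∧
  ∑ i, ∑ n, T i n * p i n ≤ E

lemma double_sum_update {K N : ℕ} (f : Fin (K+1) → Fin (N+1) → ℝ)
    (i0 : Fin (K+1)) (n0 : Fin (N+1)) (c : ℝ) :
    ∑ i, ∑ n, (if i = i0 ∧ n = n0 then c else f i n)
      = ∑ i, ∑ n, f i n - f i0 n0 + c := by
  have h1 : ∀ i n, (if i = i0 ∧ n = n0 then c else f i n)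
      = f i n + (if i = i0 ∧ n = n0 then c - f i0 n0 else 0) := by
    intro i n; split_ifs with h
    · obtain ⟨h1, h2⟩ := h; subst h1; subst h2; ring
    · ring
  simp_rw [h1, Finset.sum_add_distrib]
  have h2 : ∑ i, ∑ n, (if i = i0 ∧ n = n0 then c - f i0 n0 else 0) = c - f i0 n0 := by
    simp [ite_and, Finset.sum_ite_eq]
  rw [h2]; ring

/-- **Binding energy constraint at the optimum.**
Assume `Q, B, N0 > 0`, `H_{i,n} > 0` for every broadcast block, and that at least
one block is broadcast.  If `(T*, p*)` is an optimal solution of problem (P3.1),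
then the energy budget is exhausted: `Σ_{i,n} T*_{i,n} * p*_{i,n} = E`. -/
theorem binding_energy_constraint {K N : ℕ}
    (Q B N0 E : ℝ) (hQ : 0 < Q) (hB : 0 < B) (hN0 : 0 < N0) (hE : 0 < E)
    (α : Fin (K+1) → Fin (N+1) → Fin (K+1) → ℝ) (hα : IsBinary α)
    (Heq : Fin (K+1) → Fin (N+1) → ℝ)
    (hHeq : ∀ i n, Broadcast α i n → 0 < Heq i n)
    (hsome : ∃ i n, Broadcast α i n)
    (Tstar pstar : Fin (K+1) → Fin (N+1) → ℝ)
    (hfeas : P31Feasible Q B N0 E α Heq Tstar pstar)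
    (hopt : ∀ T p : Fin (K+1) → Fin (N+1) → ℝ,
      P31Feasible Q B N0 E α Heq T p →
      ∑ i, ∑ n, Tstar i n ≤ ∑ i, ∑ n, T i n) :
    ∑ i, ∑ n, Tstar i n * pstar i n = E := by
  classical
  obtain ⟨hT0, hp0, hrate, hen⟩ := hfeas
  by_contra hne
  have hlt : ∑ i, ∑ n, Tstar i n * pstar i n < E := lt_of_le_of_ne hen hne
  obtain ⟨i0, n0, hbc⟩ := hsome
  set S := ∑ i, ∑ n, Tstar i n * pstar i n with hS
  set ε := E - S with hεdef
  have hεpos : 0 < ε := by simp only [hεdef]; linarith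
  have hH := hHeq i0 n0 hbc
  have hr := hrate i0 n0 hbc
  set L := Real.logb 2 (1 + pstar i0 n0 * Heq i0 n0 / N0) with hLdef
  have hTpos : 0 < Tstar i0 n0 := by
    rcases lt_or_eq_of_le (hT0 i0 n0) with h | h
    · exact h
    · exfalso; rw [← h] at hr; simp at hr; linarith
  have hLpos : 0 < L := by nlinarith [mul_pos hTpos hB, mul_pos (mul_pos hTpos hB) hQ]
  set δ := ε / Tstar i0 n0 with hδdef
  have hδpos : 0 < δ := div_pos hεpos hTpos
  set p' := pstar i0 n0 + δ with hp'def
  have hppos : 0 ≤ p' := by have := hp0 i0 n0; positivity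
  set L' := Real.logb 2 (1 + p' * Heq i0 n0 / N0) with hL'def
  have hxpos : 0 < 1 + pstar i0 n0 * Heq i0 n0 / N0 := by
    have := hp0 i0 n0; positivity
  have hplt : pstar i0 n0 < p' := by simp only [hp'def]; linarith
  have hLL : L < L' := by
    apply Real.logb_lt_logb one_lt_two hxpos
    gcongr
  have hL'pos : 0 < L' := lt_trans hLpos hLL
  set t' := Q / (B * L') with ht'def
  have ht'pos : 0 < t' := div_pos hQ (mul_pos hB hL'pos)
  have ht'lt : t' < Tstar i0 n0 := by
    have h1 : Q / (B * L') < Q / (B * L) := by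
      apply div_lt_div_of_pos_left hQ (mul_pos hB hLpos)
      exact mul_lt_mul_of_pos_left hLL hB
    have h2 : Q / (B * L) ≤ Tstar i0 n0 := by
      rw [div_le_iff₀ (mul_pos hB hLpos)]; linarith
    linarith
  -- new candidate
  set Tf : Fin (K+1) → Fin (N+1) → ℝ :=
    fun i n => if i = i0 ∧ n = n0 then t' else Tstar i n with hTf
  set pf : Fin (K+1) → Fin (N+1) → ℝ :=
    fun i n => if i = i0 ∧ n = n0 then p' else pstar i n with hpf
  have hprod : ∀ i n, Tf i n * pf i n =
      (if i = i0 ∧ n = n0 then t' * p' else Tstar i n * pstar i n) := by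
    intro i n; simp only [hTf, hpf]; split_ifs <;> ring
  have hfeas' : P31Feasible Q B N0 E α Heq Tf pf := by
    refine ⟨?_, ?_, ?_, ?_⟩
    · intro i n; simp only [hTf]; split_ifs
      · exact ht'pos.le
      · exact hT0 i n
    · intro i n; simp only [hpf]; split_ifs
      · exact hppos
      · exact hp0 i n
    · intro i n hb
      by_cases h : i = i0 ∧ n = n0
      · obtain ⟨h1, h2⟩ := h
        rw [h1, h2]
        have e1 : Tf i0 n0 = t' := by simp [hTf]
        have e2 : pf i0 n0 = p' := by simp [hpf]
        rw [e1, e2, ← hL'def, ht'def, div_mul_eq_mul_div,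
          le_div_iff₀ (mul_pos hB hL'pos)]
      · simp only [hTf, hpf, if_neg h]
        exact hrate i n hb
    · simp_rw [hprod]
      rw [double_sum_update]
      have hkey : t' * p' ≤ Tstar i0 n0 * pstar i0 n0 + ε := by
        have h1 : t' * p' ≤ Tstar i0 n0 * p' :=
          mul_le_mul_of_nonneg_right ht'lt.le hppos
        have h2 : Tstar i0 n0 * δ = ε := by
          rw [hδdef]; field_simp
        nlinarith [hp0 i0 n0]
      rw [← hS]; simp only [hεdef] at hkey; linarith
  have hcmp := hopt Tf pf hfeas'
  have hsum : ∑ i, ∑ n, Tf i n =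
      ∑ i, ∑ n, Tstar i n - Tstar i0 n0 + t' := by
    simp only [hTf]; exact double_sum_update Tstar i0 n0 t'
  rw [hsum] at hcmp
  linarith
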